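/- Let A ∈ M(4,ℂ) with A and A* having no common eigenvector, and let v ≠ 0 satisfy dim span{v,Av,A*v} = 2 and dim(W(v) + A·W(v)) = 2 (i.e. W(v) + A·W(v) = W(v)). Then either W(v) is invariant under both A and A*, or the flag 0 ⊂ ℂv ⊂ W(v) ⊂ W(v)+A*·W(v) ⊂ ℂ⁴ witnesses unitary tridiagonalisability of A. -/

import Mathlib

open Matrix

local notation "E" => EuclideanSpace ℂ (Fin 4)
local notation "⟪" x ", " y "⟫" => @inner ℂ _ _ x y

/-- A matrix is tridiagonal if all entries with |i-j| ≥ 2 vanish. -/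
def IsTridiagonal {n : ℕ} (B : Matrix (Fin n) (Fin n) ℂ) : Prop :=
  ∀ i j : Fin n, 2 ≤ |(i : ℤ) - (j : ℤ)| → B i j = 0

/-- A is unitarily tridiagonalisable. -/
def IsUnitarilyTridiagonalisable {n : ℕ} (A : Matrix (Fin n) (Fin n) ℂ) : Prop :=
  ∃ U ∈ Matrix.unitaryGroup (Fin n) ℂ, IsTridiagonal (U * A * Uᴴ)

def toE (x : Fin 4 → ℂ) : EuclideanSpace ℂ (Fin 4) := WithLp.toLp 2 x

lemma finrank_comapE (W : Submodule ℂ (Fin 4 → ℂ)) :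
    Module.finrank ℂ (W.comap (WithLp.linearEquiv 2 ℂ (Fin 4 → ℂ)).toLinearMap) =
      Module.finrank ℂ W := by
  rw [Submodule.comap_equiv_eq_map_symm]; exact LinearEquiv.finrank_map_eq _ _

lemma adj_inner (A : Matrix (Fin 4) (Fin 4) ℂ) (x y : E) :
    ⟪toE (Aᴴ.mulVec x), y⟫ = ⟪x, toE (A.mulVec y)⟫ := by
  simp only [toE, PiLp.inner_apply, RCLike.inner_apply, Matrix.mulVec, Matrix.conjTranspose_apply,
    dotProduct, map_sum, _root_.map_mul, RCLike.star_def, starRingEnd_self_apply, star_star,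
    Finset.mul_sum, Finset.sum_mul]
  rw [Finset.sum_comm]
  apply Finset.sum_congr rfl; intro k _
  apply Finset.sum_congr rfl; intro l _
  ring

lemma entry_eq (A : Matrix (Fin 4) (Fin 4) ℂ) (e : Fin 4 → E) (i j : Fin 4) :
    ((Matrix.of fun i k => starRingEnd ℂ (e i k)) * A *
      (Matrix.of fun i k => starRingEnd ℂ (e i k))ᴴ) i j
      = ⟪e i, toE (A.mulVec (e j))⟫ := by
  simp only [toE, Matrix.mul_apply, Matrix.conjTranspose_apply, Matrix.of_apply,
    PiLp.inner_apply, RCLike.inner_apply, Matrix.mulVec, dotProduct,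
    Finset.mul_sum, Finset.sum_mul, star_star, RCLike.star_def, starRingEnd_self_apply]
  rw [Finset.sum_comm]
  apply Finset.sum_congr rfl; intro k _
  apply Finset.sum_congr rfl; intro l _
  ring

lemma unitary_of_orthonormal (e : Fin 4 → E)
    (hon : ∀ i j, ⟪e i, e j⟫ = if i = j then 1 else 0) :
    (Matrix.of fun i k => starRingEnd ℂ (e i k)) ∈ Matrix.unitaryGroup (Fin 4) ℂ := by
  rw [Matrix.mem_unitaryGroup_iff]
  ext i j
  have := hon i j
  simp only [PiLp.inner_apply, RCLike.inner_apply] at this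
  simp only [Matrix.mul_apply, Matrix.star_apply, Matrix.of_apply, star_star,
    Matrix.one_apply]
  simpa [mul_comm] using this


lemma exists_unit_vec (K : Submodule ℂ E) (hK : K ≠ ⊥) :
    ∃ x ∈ K, ‖x‖ = 1 := by
  obtain ⟨x, hx, hx0⟩ := K.ne_bot_iff.mp hK
  exact ⟨‖x‖⁻¹ • x, K.smul_of_tower_mem _ hx, norm_smul_inv_norm hx0⟩

set_option maxHeartbeats 1000000 in
lemma tridiag_of_flag (A : Matrix (Fin 4) (Fin 4) ℂ)
    (W1 W2 W3 : Submodule ℂ E)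
    (h12 : W1 ≤ W2) (h23 : W2 ≤ W3)
    (d1 : Module.finrank ℂ W1 = 1) (d2 : Module.finrank ℂ W2 = 2)
    (d3 : Module.finrank ℂ W3 = 3)
    (hA1 : ∀ x ∈ W1, toE (A.mulVec x) ∈ W2)
    (hAs1 : ∀ x ∈ W1, toE (Aᴴ.mulVec x) ∈ W2)
    (hA2 : ∀ x ∈ W2, toE (A.mulVec x) ∈ W3)
    (hAs2 : ∀ x ∈ W2, toE (Aᴴ.mulVec x) ∈ W3) :
    IsUnitarilyTridiagonalisable A := by
  obtain ⟨e0, he0, hn0⟩ := exists_unit_vec W1 (by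
    intro h; rw [h] at d1; simp at d1)
  obtain ⟨e1, he1, hn1⟩ := exists_unit_vec (W1ᗮ ⊓ W2) (by
    intro h
    have := Submodule.finrank_add_inf_finrank_orthogonal h12
    rw [h, d1, d2] at this; simp at this)
  obtain ⟨e2, he2, hn2⟩ := exists_unit_vec (W2ᗮ ⊓ W3) (by
    intro h
    have := Submodule.finrank_add_inf_finrank_orthogonal h23
    rw [h, d2, d3] at this; simp at this)
  obtain ⟨e3, he3, hn3⟩ := exists_unit_vec W3ᗮ (by
    intro h
    have := Submodule.finrank_add_finrank_orthogonal (K := W3)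
    rw [h, d3] at this
    simp [finrank_euclideanSpace] at this)
  obtain ⟨he1o, he1m⟩ := he1
  obtain ⟨he2o, he2m⟩ := he2
  set e : Fin 4 → E := ![e0, e1, e2, e3] with he
  have hself : ∀ x : E, ‖x‖ = 1 → ⟪x, x⟫ = 1 := by
    intro x hx
    rw [@inner_self_eq_norm_sq_to_K ℂ, hx]; norm_num
  have h01 : ⟪e0, e1⟫ = 0 := Submodule.inner_right_of_mem_orthogonal he0 he1o
  have h02 : ⟪e0, e2⟫ = 0 := Submodule.inner_right_of_mem_orthogonal (h12 he0) he2o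
  have h12' : ⟪e1, e2⟫ = 0 := Submodule.inner_right_of_mem_orthogonal he1m he2o
  have h03 : ⟪e0, e3⟫ = 0 := Submodule.inner_right_of_mem_orthogonal (h23 (h12 he0)) he3
  have h13 : ⟪e1, e3⟫ = 0 := Submodule.inner_right_of_mem_orthogonal (h23 he1m) he3
  have h23' : ⟪e2, e3⟫ = 0 := Submodule.inner_right_of_mem_orthogonal he2m he3
  have hon : ∀ i j, ⟪e i, e j⟫ = if i = j then 1 else 0 := by
    intro i j
    fin_cases i <;> fin_cases j <;>
      first
      | (rw [if_pos rfl]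
         first | exact hself _ hn0 | exact hself _ hn1 | exact hself _ hn2
               | exact hself _ hn3)
      | (rw [if_neg (by decide)]
         first
         | exact h01 | exact h02 | exact h03 | exact h12' | exact h13 | exact h23'
         | (rw [inner_eq_zero_symm]
            first | exact h01 | exact h02 | exact h03 | exact h12' | exact h13
                  | exact h23'))
  refine ⟨Matrix.of fun i k => starRingEnd ℂ (e i k), unitary_of_orthonormal e hon, ?_⟩
  intro i j hij
  rw [entry_eq]
  fin_cases i <;> fin_cases j
  · norm_num at hij
  · norm_num at hij
  · rw [← adj_inner]
    exact Submodule.inner_right_of_mem_orthogonal (hAs1 e0 he0) he2o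
  · rw [← adj_inner]
    exact Submodule.inner_right_of_mem_orthogonal (h23 (hAs1 e0 he0)) he3
  · norm_num at hij
  · norm_num at hij
  · norm_num at hij
  · rw [← adj_inner]
    exact Submodule.inner_right_of_mem_orthogonal (hAs2 e1 he1m) he3
  · exact Submodule.inner_left_of_mem_orthogonal (hA1 e0 he0) he2o
  · norm_num at hij
  · norm_num at hij
  · norm_num at hij
  · exact Submodule.inner_left_of_mem_orthogonal (h23 (hA1 e0 he0)) he3
  · exact Submodule.inner_left_of_mem_orthogonal (hA2 e1 he1m) he3
  · norm_num at hij
  · norm_num at hij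


theorem dichotomy_of_W3_dim_two (A : Matrix (Fin 4) (Fin 4) ℂ)
    (hcommon : ¬ ∃ v : Fin 4 → ℂ, v ≠ 0 ∧ (∃ μ : ℂ, A.mulVec v = μ • v) ∧
      (∃ ν : ℂ, Aᴴ.mulVec v = ν • v))
    (v : Fin 4 → ℂ) (hv : v ≠ 0)
    (W : Submodule ℂ (Fin 4 → ℂ))
    (hWdef : W = Submodule.span ℂ {v, A.mulVec v, Aᴴ.mulVec v})
    (hWdim : Module.finrank ℂ W = 2)
    (hW3dim : Module.finrank ℂ (W ⊔ W.map A.mulVecLin : Submodule ℂ (Fin 4 → ℂ)) = 2) :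
    (W.map A.mulVecLin ≤ W ∧ W.map Aᴴ.mulVecLin ≤ W) ∨
    (((Submodule.span ℂ {v}).map A.mulVecLin ≤ W ∧
      (Submodule.span ℂ {v}).map Aᴴ.mulVecLin ≤ W ∧
      W.map A.mulVecLin ≤ W ⊔ W.map Aᴴ.mulVecLin ∧
      W.map Aᴴ.mulVecLin ≤ W ⊔ W.map Aᴴ.mulVecLin) ∧
     IsUnitarilyTridiagonalisable A) := by
  classical
  have hAW : W.map A.mulVecLin ≤ W := by
    have h2 : W = W ⊔ W.map A.mulVecLin :=
      Submodule.eq_of_le_of_finrank_le le_sup_left (by rw [hWdim, hW3dim])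
    exact le_sup_right.trans h2.ge
  have hvW : v ∈ W := by
    rw [hWdef]; exact Submodule.subset_span (by simp)
  have hAvW : A.mulVec v ∈ W := by
    rw [hWdef]; exact Submodule.subset_span (by simp)
  have hAsvW : Aᴴ.mulVec v ∈ W := by
    rw [hWdef]; exact Submodule.subset_span (by simp)
  have hspanA : (Submodule.span ℂ {v}).map A.mulVecLin ≤ W := by
    rw [Submodule.map_span, Set.image_singleton]
    exact Submodule.span_le.mpr (by simpa using hAvW)
  have hspanAs : (Submodule.span ℂ {v}).map Aᴴ.mulVecLin ≤ W := by
    rw [Submodule.map_span, Set.image_singleton]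
    exact Submodule.span_le.mpr (by simpa using hAsvW)
  by_cases hs : W.map Aᴴ.mulVecLin ≤ W
  · exact Or.inl ⟨hAW, hs⟩
  refine Or.inr ⟨⟨hspanA, hspanAs, hAW.trans le_sup_left, le_sup_right⟩, ?_⟩
  set W3 : Submodule ℂ (Fin 4 → ℂ) := W ⊔ W.map Aᴴ.mulVecLin with hW3
  have hsum : Module.finrank ℂ W3 +
      Module.finrank ℂ (W ⊓ W.map Aᴴ.mulVecLin : Submodule ℂ (Fin 4 → ℂ)) =
      Module.finrank ℂ W + Module.finrank ℂ (W.map Aᴴ.mulVecLin) :=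
    Submodule.finrank_sup_add_finrank_inf_eq W (W.map Aᴴ.mulVecLin)
  have hmaple : Module.finrank ℂ (W.map Aᴴ.mulVecLin) ≤ 2 :=
    (Submodule.finrank_map_le _ _).trans_eq hWdim
  have hfr_le : Module.finrank ℂ W3 ≤ 3 := by
    by_cases hz : Aᴴ.mulVec v = 0
    · have hmap1 : Module.finrank ℂ (W.map Aᴴ.mulVecLin) ≤ 1 := by
        have hle : W.map Aᴴ.mulVecLin ≤
            Submodule.span ℂ {Aᴴ.mulVec (A.mulVec v)} := by
          rw [hWdef, Submodule.map_span]
          apply Submodule.span_le.mpr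
          intro x hx
          simp only [Set.image_insert_eq, Set.image_singleton, Matrix.mulVecLin_apply,
            hz, Matrix.mulVec_zero] at hx
          rcases hx with h | h | h
          · rw [h]; exact Submodule.zero_mem _
          · rw [h]; exact Submodule.subset_span rfl
          · rw [h]; exact Submodule.zero_mem _
        refine (Submodule.finrank_mono hle).trans ?_
        by_cases hz2 : Aᴴ.mulVec (A.mulVec v) = 0
        · rw [hz2, Submodule.span_zero_singleton]
          simp
        · rw [finrank_span_singleton hz2]
      omega
    · have hne : W ⊓ W.map Aᴴ.mulVecLin ≠ ⊥ := by
        rw [Submodule.ne_bot_iff]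
        exact ⟨Aᴴ.mulVec v, ⟨hAsvW, Submodule.mem_map_of_mem hvW⟩, hz⟩
      have h1 : 1 ≤ Module.finrank ℂ (W ⊓ W.map Aᴴ.mulVecLin : Submodule ℂ (Fin 4 → ℂ)) := by
        rw [Nat.one_le_iff_ne_zero]
        intro h0
        exact hne (Submodule.finrank_eq_zero.mp h0)
      omega
  have hfr_ge : 3 ≤ Module.finrank ℂ W3 := by
    by_contra hc
    push_neg at hc
    have : W = W3 :=
      Submodule.eq_of_le_of_finrank_le le_sup_left (by omega)
    exact hs (le_sup_right.trans this.ge)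
  have hfr : Module.finrank ℂ W3 = 3 := le_antisymm hfr_le hfr_ge
  exact tridiag_of_flag A
    ((Submodule.span ℂ {v}).comap (WithLp.linearEquiv 2 ℂ (Fin 4 → ℂ)).toLinearMap)
    (W.comap (WithLp.linearEquiv 2 ℂ (Fin 4 → ℂ)).toLinearMap)
    (W3.comap (WithLp.linearEquiv 2 ℂ (Fin 4 → ℂ)).toLinearMap)
    (Submodule.comap_mono (Submodule.span_le.mpr (by simpa using hvW)))
    (Submodule.comap_mono le_sup_left)
    ((finrank_comapE _).trans (finrank_span_singleton hv)) ((finrank_comapE _).trans hWdim)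
    ((finrank_comapE _).trans hfr)
    (fun x hx => hspanA (Submodule.mem_map_of_mem hx))
    (fun x hx => hspanAs (Submodule.mem_map_of_mem hx))
    (fun x hx => (le_sup_left : W ≤ W3) (hAW (Submodule.mem_map_of_mem hx)))
    (fun x hx => (le_sup_right : W.map Aᴴ.mulVecLin ≤ W3) (Submodule.mem_map_of_mem hx))
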